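/- arXiv:1710.02782 — 3 statements merged into one kernel-verified Lean document; each statement's English description precedes it below -/
import Mathlib

section
/- For all n ≥ 0, the number of distinct Lyndon factors of W_n beginning with the letter 0 equals f_{n+2}; and for every odd k ≥ 1 and every n ≥ k, the number of distinct Lyndon factors of W_n beginning with the letter k equals f_{n+3-k} - 1. -/
/-- The morphism `phi` on the alphabet `ℕ`: `phi (2i) = (2i)(2i+1)` and `phi (2i+1) = (2i+2)`. -/
def phi (a : ℕ) : List ℕ := if a % 2 = 0 then [a, a + 1] else [a + 1]

/-- The finite ZWW words: `W n = phi^n(0)`, so `W 0 = 0`, `W 1 = 01`, `W 2 = 012`, `W 3 = 01223`. -/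
def W (n : ℕ) : List ℕ := (fun w => w.flatMap phi)^[n] [0]

/-- A nonempty word is Lyndon if it is lexicographically strictly less than each of its
conjugates `v ++ u` where `x = u ++ v` with `u, v` nonempty. -/
def IsLyndon (x : List ℕ) : Prop :=
  x ≠ [] ∧ ∀ u v : List ℕ, u ≠ [] → v ≠ [] → x = u ++ v → List.Lex (· < ·) x (v ++ u)

lemma phi_add_two (a : ℕ) : phi (a + 2) = (phi a).map (· + 2) := by
  unfold phi
  rcases Nat.even_or_odd a with h | h
  · have h0 : a % 2 = 0 := Nat.even_iff.mp h
    simp [Nat.add_mod_right, h0]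
  · have h1 : a % 2 = 1 := Nat.odd_iff.mp h
    simp [Nat.add_mod_right, h1]

lemma step_append (l₁ l₂ : List ℕ) :
    (l₁ ++ l₂).flatMap phi = l₁.flatMap phi ++ l₂.flatMap phi := List.flatMap_append

lemma step_map (l : List ℕ) :
    (l.map (· + 2)).flatMap phi = (l.flatMap phi).map (· + 2) := by
  induction l with
  | nil => simp
  | cons a l ih => simp [phi_add_two, ih]

lemma iter_append (n : ℕ) (l₁ l₂ : List ℕ) :
    (fun w => w.flatMap phi)^[n] (l₁ ++ l₂)
      = (fun w => w.flatMap phi)^[n] l₁ ++ (fun w => w.flatMap phi)^[n] l₂ := by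
  induction n generalizing l₁ l₂ with
  | zero => simp
  | succ n ih => simp only [Function.iterate_succ_apply]; rw [step_append, ih]

lemma iter_map (n : ℕ) (l : List ℕ) :
    (fun w => w.flatMap phi)^[n] (l.map (· + 2))
      = ((fun w => w.flatMap phi)^[n] l).map (· + 2) := by
  induction n generalizing l with
  | zero => simp
  | succ n ih => simp only [Function.iterate_succ_apply]; rw [step_map, ih]

lemma Wrec (n : ℕ) : W (n + 2) = W (n + 1) ++ (W n).map (· + 2) := by
  unfold W
  have h2 : (fun w => w.flatMap phi)^[2] [0] = [0, 1] ++ [2] := rfl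
  rw [Function.iterate_add_apply, h2, iter_append]
  have e1 : (fun w => w.flatMap phi)^[n] [0, 1] = (fun w => w.flatMap phi)^[n + 1] [0] := by
    rw [show ([0, 1] : List ℕ) = (fun w => w.flatMap phi) [0] from rfl,
      ← Function.iterate_succ_apply]
  have e2 : (fun w => w.flatMap phi)^[n] [2]
      = ((fun w => w.flatMap phi)^[n] [0]).map (· + 2) := by
    rw [show ([2] : List ℕ) = ([0] : List ℕ).map (· + 2) from rfl, iter_map]
  rw [e1, e2]

lemma W_length (n : ℕ) : (W n).length = Nat.fib (n + 2) := by
  induction n using Nat.strong_induction_on with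
  | _ n ih =>
    rcases n with _ | _ | n
    · rfl
    · rfl
    · rw [Wrec, List.length_append, List.length_map, ih (n+1) (by omega), ih n (by omega)]
      have h1 := Nat.fib_add_two (n := n + 2)
      ring_nf at h1 ⊢
      omega

lemma Wstruct1 : ∀ n, 1 ≤ n → ∃ r, W n = 0 :: 1 :: r ∧ ∀ b ∈ r, 2 ≤ b := by
  intro n
  induction n using Nat.strong_induction_on with
  | _ n ih =>
    rcases n with _ | _ | n
    · omega
    · intro _; exact ⟨[], rfl, by simp⟩
    · intro _
      obtain ⟨r, hr, hb⟩ := ih (n + 1) (by omega) (by omega)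
      refine ⟨r ++ (W n).map (· + 2), ?_, ?_⟩
      · rw [Wrec, hr]; simp
      · intro b hbmem
        rcases List.mem_append.mp hbmem with h | h
        · exact hb b h
        · obtain ⟨c, _, rfl⟩ := List.mem_map.mp h; omega

lemma Wstruct : ∀ n, ∃ t, W n = 0 :: t ∧ ∀ b ∈ t, 0 < b := by
  intro n
  rcases n with _ | n
  · exact ⟨[], rfl, by simp⟩
  · obtain ⟨r, hr, hb⟩ := Wstruct1 (n+1) (by omega)
    refine ⟨1 :: r, hr, ?_⟩
    intro b hbm
    rcases List.mem_cons.mp hbm with rfl | h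
    · omega
    · have := hb b h; omega

lemma W_prefix (n : ℕ) : W n <+: W (n + 1) := by
  rcases n with _ | n
  · exact ⟨[1], rfl⟩
  · rw [Wrec]; exact List.prefix_append _ _

lemma W_prefix_le {m n : ℕ} (h : m ≤ n) : W m <+: W n := by
  induction n with
  | zero => rw [Nat.le_zero.mp h]
  | succ n ih =>
    rcases Nat.lt_or_ge m (n+1) with h' | h'
    · exact (ih (by omega)).trans (W_prefix n)
    · rw [show m = n + 1 by omega]

lemma tail_prefix_of_prefix {l l' : List ℕ} (h : l <+: l') : l.tail <+: l'.tail := by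
  obtain ⟨s, rfl⟩ := h
  cases l with
  | nil => simp
  | cons a t => exact ⟨s, rfl⟩
lemma drop_app_ge (s x y : List ℕ) (h : x.length ≤ s.length) :
    (x ++ y).drop s.length = y.drop (s.length - x.length) := by
  rw [show s.length = x.length + (s.length - x.length) by omega, List.drop_length_add_append]
  congr 1; omega

lemma infix_append_split {u x y : List ℕ} (h : u <:+: x ++ y) :
    u <:+: x ∨ u <:+: y ∨
      ∃ u1 u2, u = u1 ++ u2 ∧ u1 ≠ [] ∧ u2 ≠ [] ∧ u1 <:+ x ∧ u2 <+: y := by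
  obtain ⟨s, t, hst⟩ := h
  have hd : u ++ t = (x ++ y).drop s.length := by
    rw [← hst, List.append_assoc, List.drop_left]
  have hu : u <+: (x ++ y).drop s.length := ⟨t, hd⟩
  rcases le_or_gt x.length s.length with hle | hlt
  · right; left
    rw [drop_app_ge s x y hle] at hu
    exact hu.isInfix.trans (List.drop_suffix _ _).isInfix
  · rw [List.drop_append_of_le_length (by omega)] at hu
    set a := x.drop s.length with ha
    have hane : a ≠ [] := by
      have : a.length = x.length - s.length := by rw [ha, List.length_drop]
      intro hnil; rw [hnil] at this; simp at this; omega
    rcases le_or_gt u.length a.length with hul | hul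
    · left
      have : u <+: a := List.prefix_of_prefix_length_le hu (List.prefix_append a y) hul
      exact this.isInfix.trans (List.drop_suffix _ _).isInfix
    · right; right
      have hau : a <+: u :=
        List.prefix_of_prefix_length_le (List.prefix_append a y) hu (by omega)
      obtain ⟨u2, hu2⟩ := hau
      refine ⟨a, u2, hu2.symm, hane, ?_, List.drop_suffix _ _, ?_⟩
      · intro hnil
        rw [hnil, List.append_nil] at hu2
        rw [← hu2] at hul; omega
      · rw [← hu2] at hu
        exact (List.prefix_append_right_inj a).mp hu

lemma infix_map {u l : List ℕ} (f : ℕ → ℕ) (h : u <:+: l.map f) :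
    ∃ u', u' <:+: l ∧ u = u'.map f := by
  obtain ⟨s, t, hst⟩ := h
  refine ⟨(l.drop s.length).take u.length, ?_, ?_⟩
  · exact ((List.take_prefix _ _).isInfix).trans (List.drop_suffix _ _).isInfix
  · have hd : u ++ t = (l.map f).drop s.length := by
      rw [← hst, List.append_assoc, List.drop_left]
    have : u = ((l.map f).drop s.length).take u.length := by
      rw [← hd, List.take_left]
    conv_lhs => rw [this]
    rw [← List.map_drop, ← List.map_take]

lemma prefix_of_unique_head :
    ∀ (s w1 : List ℕ) {b : ℕ} {v t w2 : List ℕ}, b ∉ w1 → b ∉ w2 →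
      s ++ (b :: v) ++ t = w1 ++ b :: w2 → (b :: v) <+: (b :: w2) := by
  intro s
  induction s with
  | nil =>
    intro w1 b v t w2 h1 h2 h
    cases w1 with
    | nil =>
      simp only [List.nil_append, List.cons_append, List.append_assoc] at h
      injection h with _ h
      exact ⟨t, by rw [← h]; simp⟩
    | cons c w1' =>
      simp only [List.nil_append, List.cons_append] at h
      injection h with hc _
      exact absurd (hc ▸ List.mem_cons_self (a := c) (l := w1')) h1
  | cons c s' ih =>
    intro w1 b v t w2 h1 h2 h
    cases w1 with
    | nil =>
      simp only [List.nil_append, List.cons_append, List.append_assoc] at h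
      injection h with hc h
      exfalso; apply h2
      rw [← h]; simp
    | cons d w1' =>
      simp only [List.cons_append] at h
      injection h with _ h
      exact ih w1' (fun hm => h1 (List.mem_cons_of_mem _ hm)) h2 h

lemma W_head (n : ℕ) : ∃ t, W n = 0 :: t := by
  obtain ⟨t, ht, -⟩ := Wstruct n; exact ⟨t, ht⟩

/-- Adjacent pairs: if the second letter is odd, the first is one less. -/
lemma pair_lemma : ∀ n a b, [a, b] <:+: W n → b % 2 = 1 → a + 1 = b := by
  intro n
  induction n using Nat.strong_induction_on with
  | _ n ih =>
    rcases n with _ | _ | n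
    · intro a b h hb
      have := h.length_le; simp [W] at this
    · intro a b h hb
      have : [a, b] = W 1 := h.eq_of_length (by rfl)
      have ha : a = 0 := by injection this
      have hbv : b = 1 := by injection this with _ h2; injection h2
      omega
    · intro a b h hb
      rw [Wrec] at h
      rcases infix_append_split h with h' | h' | ⟨u1, u2, he, h1ne, h2ne, h1s, h2p⟩
      · exact ih (n + 1) (by omega) a b h' hb
      · obtain ⟨u', hu', hm⟩ := infix_map _ h'
        match u', hm with
        | [a', b'], hm =>
          have ha : a = a' + 2 := by injection hm
          have hbv : b = b' + 2 := by injection hm with _ h2; injection h2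
          have := ih n (by omega) a' b' hu' (by omega)
          omega
      · have hlen : u1.length + u2.length = 2 := by
          have := congrArg List.length he; simpa using this.symm
        have h1p := List.length_pos_iff.mpr h1ne
        have h2p' := List.length_pos_iff.mpr h2ne
        obtain ⟨a0, rfl⟩ : ∃ a0, u1 = [a0] := by
          match u1, (by omega : u1.length = 1) with | [a0], _ => exact ⟨a0, rfl⟩
        obtain ⟨b0, rfl⟩ : ∃ b0, u2 = [b0] := by
          match u2, (by omega : u2.length = 1) with | [b0], _ => exact ⟨b0, rfl⟩
        obtain ⟨haa, hbb⟩ : a = a0 ∧ b = b0 := by simpa using he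
        obtain ⟨t, ht⟩ := W_head n
        rw [ht] at h2p
        have : b0 = 2 := by
          obtain ⟨s, hs⟩ := h2p
          rw [List.map_cons] at hs
          have : (0 : ℕ) + 2 = b0 := (List.cons.injEq .. ▸ hs.symm).1
          omega
        omega

/-- Words with a strict minimum at the head are Lyndon. -/
lemma lyndon_of_min_head (a : ℕ) (t : List ℕ) (ht : ∀ b ∈ t, a < b) :
    IsLyndon (a :: t) := by
  refine ⟨by simp, ?_⟩
  rintro u v hu hv huv
  match u, hu with
  | c :: u', _ =>
    have hc : c = a := by
      have : a = c := by injection huv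
      omega
    subst hc
    match v, hv with
    | d :: v', _ =>
      have hd : d ∈ t := by
        have : t = u' ++ d :: v' := by injection huv
        rw [this]; simp
      exact List.Lex.rel (ht d hd)

lemma prefix_cons_structure {u : List ℕ} {a : ℕ} {t : List ℕ}
    (h : u <+: a :: t) (hne : u ≠ []) : ∃ u', u = a :: u' ∧ ∀ b ∈ u', b ∈ t := by
  match u, hne with
  | c :: u', _ =>
    obtain ⟨hca, hu'⟩ := List.cons_prefix_cons.mp h
    exact ⟨u', by rw [hca], fun b hb => hu'.sublist.mem hb⟩

/-- Key lemma: factors with odd head `2j+1` whose other letters exceed `2j+1`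
are prefixes of the canonical suffix. -/
lemma key_lemma : ∀ n j (v : List ℕ), ((2*j+1) :: v <:+: W n) → (∀ b ∈ v, 2*j+1 < b) →
    2*j+1 ≤ n ∧ (2*j+1) :: v <+: ((W (n - 2*j)).tail).map (fun b => b + 2*j) := by
  intro n
  induction n using Nat.strong_induction_on with
  | _ n ih =>
    intro j v hinf hv
    rcases j with _ | i
    · -- j = 0
      have hidx : n - 2*0 = n := by omega
      have hmap : ((W n).tail).map (fun b => b + 2*0) = (W n).tail := by
        simp
      rw [hidx, hmap]
      rcases n with _ | m
      · exfalso
        have : (2*0+1 : ℕ) ∈ W 0 := hinf.subset List.mem_cons_self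
        simp [W] at this
      · obtain ⟨r, hr, hrb⟩ := Wstruct1 (m+1) (by omega)
        obtain ⟨s, t, hst⟩ := hinf
        rw [hr] at hst
        have h1 : (1 : ℕ) ∉ ([0] : List ℕ) := by simp
        have h2 : (1 : ℕ) ∉ r := fun hm => by have := hrb 1 hm; omega
        have := prefix_of_unique_head s [0] h1 h2 (by simpa using hst)
        constructor
        · omega
        · rw [hr]; simpa using this
    · -- j = i + 1
      rcases n with _ | _ | m
      · exfalso
        have : (2*(i+1)+1 : ℕ) ∈ W 0 := hinf.subset List.mem_cons_self
        simp [W] at this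
      · exfalso
        have : (2*(i+1)+1 : ℕ) ∈ W 1 := hinf.subset List.mem_cons_self
        have : 2*(i+1)+1 = 0 ∨ 2*(i+1)+1 = 1 := by simpa [show W 1 = [0,1] from rfl] using this
        omega
      · rw [Wrec] at hinf
        rcases infix_append_split hinf with h' | h' | ⟨u1, u2, he, h1ne, h2ne, h1s, h2p⟩
        · obtain ⟨hle, hpre⟩ := ih (m+1) (by omega) (i+1) v h' hv
          refine ⟨by omega, ?_⟩
          refine hpre.trans (List.IsPrefix.map _ ?_)
          exact tail_prefix_of_prefix (W_prefix_le (by omega))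
        · obtain ⟨u', hu', hm⟩ := infix_map _ h'
          match u', hm with
          | c :: v', hm =>
            rw [List.map_cons] at hm
            have h1 : 2*(i+1)+1 = c + 2 := by
              have := (List.cons.injEq .. ▸ hm).1
              simpa using this
            have hvv : v = v'.map (fun x => x + 2) := (List.cons.injEq .. ▸ hm).2
            have hc : c = 2*i+1 := by omega
            subst hc
            have hv' : ∀ b ∈ v', 2*i+1 < b := by
              intro b hb
              have : b + 2 ∈ v := by rw [hvv]; exact List.mem_map_of_mem hb
              have := hv _ this; omega
            obtain ⟨hle, hpre⟩ := ih m (by omega) i v' hu' hv'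
            refine ⟨by omega, ?_⟩
            have hpre2 := List.IsPrefix.map (fun b => b + 2) hpre
            rw [List.map_map] at hpre2
            have hcomp : ((fun b => b + 2) ∘ (fun b => b + 2*i)) = (fun b => b + 2*(i+1)) := by
              funext b; simp; omega
            rw [hcomp] at hpre2
            have hidx : m + 2 - 2*(i+1) = m - 2*i := by omega
            have hmm : (2*(i+1)+1) :: v = ((2*i+1) :: v').map (fun b => b + 2) := by
              rw [List.map_cons, ← hvv]
              congr 1
            rw [hidx, hmm]
            exact hpre2
        · exfalso
          obtain ⟨t0, ht0⟩ := W_head m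
          rw [ht0, List.map_cons] at h2p
          obtain ⟨u2', hu2', -⟩ := prefix_cons_structure h2p h2ne
          match u1, h1ne with
          | c :: u1', _ =>
            have hvv : v = u1' ++ u2 := by
              have : (2*(i+1)+1) :: v = c :: (u1' ++ u2) := by rw [he]; simp
              injection this
            have h2v : (0+2 : ℕ) ∈ v := by
              rw [hvv, hu2']
              simp
            have := hv _ h2v
            omega

/-- Lyndon factors with odd head have all other letters strictly larger. -/
lemma lyndon_tail_gt {n k : ℕ} {v : List ℕ} (hodd : k % 2 = 1)
    (hinf : (k :: v) <:+: W n) (hL : IsLyndon (k :: v)) : ∀ b ∈ v, k < b := by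
  have hge : ∀ b ∈ v, k ≤ b := by
    by_contra hc
    push_neg at hc
    obtain ⟨b, hb, hbk⟩ := hc
    obtain ⟨x, y, hxy⟩ := List.append_of_mem hb
    have hlex := hL.2 (k :: x) (b :: y) (by simp) (by simp) (by rw [hxy]; simp)
    rw [List.cons_append] at hlex
    cases hlex with
    | cons h => omega
    | rel h => omega
  have hnk : k ∉ v := by
    intro hkv
    obtain ⟨x, y, hxy⟩ := List.append_of_mem hkv
    have hne : (k :: x) ≠ [] := by simp
    set c := (k :: x).getLast hne with hcdef
    have hdl : (k :: x).dropLast ++ [c] = k :: x := List.dropLast_append_getLast hne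
    have hpair : [c, k] <:+: W n := by
      refine List.IsInfix.trans ?_ hinf
      refine ⟨(k :: x).dropLast, y, ?_⟩
      rw [show (k :: x).dropLast ++ [c, k] ++ y = ((k :: x).dropLast ++ [c]) ++ (k :: y) by
        simp, hdl, hxy]
      simp
    have hck : c + 1 = k := pair_lemma n c k hpair hodd
    have hcm : c ∈ k :: x := List.getLast_mem hne
    rcases List.mem_cons.mp hcm with hck' | hcx
    · omega
    · have : c ∈ v := by rw [hxy]; simp [hcx]
      have := hge c this
      omega
  intro b hb
  have := hge b hb
  rcases Nat.lt_or_ge k b with h | h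
  · exact h
  · exfalso
    have : b = k := by omega
    exact hnk (this ▸ hb)

/-- The canonical suffix word is indeed a suffix of `W n`. -/
lemma S_suffix : ∀ j n, 2*j+1 ≤ n → (((W (n - 2*j)).tail).map (fun b => b + 2*j)) <:+ W n := by
  intro j
  induction j with
  | zero =>
    intro n _
    have hidx : n - 2*0 = n := by omega
    have hmap : ((W n).tail).map (fun b => b + 2*0) = (W n).tail := by simp
    rw [hidx, hmap]
    exact List.tail_suffix _
  | succ i ih =>
    intro n hn
    obtain ⟨m, rfl⟩ : ∃ m, n = m + 2 := ⟨n - 2, by omega⟩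
    have h2 : 2*i+1 ≤ m := by omega
    have hsuf := List.IsSuffix.map (fun b => b + 2) (ih m h2)
    rw [List.map_map] at hsuf
    have hcomp : ((fun b => b + 2) ∘ (fun b => b + 2*i)) = (fun b => b + 2*(i+1)) := by
      funext b; simp; omega
    rw [hcomp] at hsuf
    have hidx : m + 2 - 2*(i+1) = m - 2*i := by omega
    rw [hidx]
    refine hsuf.trans ?_
    rw [Wrec]
    exact (List.suffix_append _ _)

/-- Counting nonempty prefixes of a list. -/
lemma ncard_prefixes (S : List ℕ) : {u : List ℕ | u <+: S ∧ u ≠ []}.ncard = S.length := by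
  have hset : {u : List ℕ | u <+: S ∧ u ≠ []} =
      ↑((Finset.range S.length).image fun i => S.take (i+1)) := by
    ext u
    simp only [Finset.coe_image, Finset.coe_range, Set.mem_image, Set.mem_Iio,
      Set.mem_setOf_eq]
    constructor
    · rintro ⟨hp, hne⟩
      have h1 : 1 ≤ u.length := List.length_pos_iff.mpr hne
      have h2 := hp.length_le
      refine ⟨u.length - 1, by omega, ?_⟩
      rw [show u.length - 1 + 1 = u.length by omega]
      exact (List.prefix_iff_eq_take.mp hp).symm
    · rintro ⟨i, hi, rfl⟩
      refine ⟨List.take_prefix _ _, ?_⟩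
      have hl : (S.take (i+1)).length = i+1 := by rw [List.length_take]; omega
      intro h; rw [h] at hl; simp at hl
  rw [hset, Set.ncard_coe_finset, Finset.card_image_of_injOn, Finset.card_range]
  intro i hi j hj hij
  simp only [Finset.coe_range, Set.mem_Iio] at hi hj
  simp only at hij
  have hlen : (S.take (i+1)).length = (S.take (j+1)).length := by rw [hij]
  rw [List.length_take, List.length_take] at hlen
  omega

/-- The number of distinct Lyndon factors of `W n` beginning with the letter `0`
is `f (n+2)`; and for every odd `k ≥ 1` and every `n ≥ k`, the number of distinct
Lyndon factors of `W n` beginning with the letter `k` is `f (n+3-k) - 1`. -/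
theorem zww_lyndon_count_zero_odd :
    (∀ n : ℕ, {u : List ℕ | u <:+: W n ∧ IsLyndon u ∧ u.head? = some 0}.ncard =
      Nat.fib (n + 2)) ∧
    (∀ k n : ℕ, Odd k → 1 ≤ k → k ≤ n →
      {u : List ℕ | u <:+: W n ∧ IsLyndon u ∧ u.head? = some k}.ncard =
        Nat.fib (n + 3 - k) - 1) := by
  constructor
  · -- letter 0
    intro n
    obtain ⟨t, ht, htb⟩ := Wstruct n
    have hset : {u : List ℕ | u <:+: W n ∧ IsLyndon u ∧ u.head? = some 0} =
        {u : List ℕ | u <+: W n ∧ u ≠ []} := by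
      ext u
      simp only [Set.mem_setOf_eq]
      constructor
      · rintro ⟨hinf, hL, hhead⟩
        match u, hL.1 with
        | c :: u', _ =>
          have hc : c = 0 := by simpa using hhead
          subst hc
          obtain ⟨s, t', hst⟩ := hinf
          rw [ht] at hst
          have h0t : (0 : ℕ) ∉ t := fun hm => by have := htb 0 hm; omega
          have hpre := prefix_of_unique_head s [] (by simp) h0t (by simpa using hst)
          exact ⟨by rw [ht]; exact hpre, by simp⟩
      · rintro ⟨hp, hne⟩
        rw [ht] at hp
        obtain ⟨u', rfl, hmem⟩ := prefix_cons_structure hp hne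
        refine ⟨?_, ?_, rfl⟩
        · rw [ht]; exact hp.isInfix
        · exact lyndon_of_min_head 0 u' (fun b hb => htb b (hmem b hb))
    rw [hset, ncard_prefixes, W_length]
  · -- odd letters
    intro k n hodd h1k hkn
    obtain ⟨j, hj⟩ := hodd
    have hk : k = 2*j + 1 := by omega
    set S := ((W (n - 2*j)).tail).map (fun b => b + 2*j) with hS
    obtain ⟨r, hr, hrb⟩ := Wstruct1 (n - 2*j) (by omega)
    have hSstruct : S = (2*j+1) :: (r.map (fun b => b + 2*j)) := by
      rw [hS, hr]
      simp only [List.tail_cons, List.map_cons]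
      congr 1
      omega
    have hset : {u : List ℕ | u <:+: W n ∧ IsLyndon u ∧ u.head? = some k} =
        {u : List ℕ | u <+: S ∧ u ≠ []} := by
      ext u
      simp only [Set.mem_setOf_eq]
      constructor
      · rintro ⟨hinf, hL, hhead⟩
        match u, hL.1 with
        | c :: u', _ =>
          have hc : c = k := by simpa using hhead
          subst hc
          have hv := lyndon_tail_gt (by omega) hinf hL
          rw [hk] at hinf hv
          obtain ⟨-, hpre⟩ := key_lemma n j u' hinf hv
          rw [← hk] at hpre
          exact ⟨hpre, by simp⟩
      · rintro ⟨hp, hne⟩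
        rw [hSstruct] at hp
        obtain ⟨u', rfl, hmem⟩ := prefix_cons_structure hp hne
        have hgt : ∀ b ∈ u', 2*j+1 < b := by
          intro b hb
          obtain ⟨c, hc, rfl⟩ := List.mem_map.mp (hmem b hb)
          have := hrb c hc
          omega
        refine ⟨?_, ?_, ?_⟩
        · have hsuf := S_suffix j n (by omega)
          have hSin : (2*j+1) :: u' <:+: S := by
            rw [hSstruct]
            exact hp.isInfix
          exact hSin.trans hsuf.isInfix
        · exact lyndon_of_min_head _ u' hgt
        · simp [hk]
    rw [hset, ncard_prefixes, hS, List.length_map, List.length_tail, W_length]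
    have hidx : n - 2*j + 2 = n + 3 - k := by omega
    rw [hidx]
end

section
/- For every even k ≥ 4 and every n ≥ k, the number of distinct Lyndon factors of W_n beginning with the letter k equals the number of distinct Lyndon factors of W_{n-k+2} beginning with the letter 2. -/
/-! ### Auxiliary definitions -/

/-- The tail of `W m`. -/
def T (m : ℕ) : List ℕ := (W m).tail

/-- The shifted tail `X m = (tail of W m) + 2`. -/
def X (m : ℕ) : List ℕ := (T m).map (· + 2)

lemma W_succ (m : ℕ) : W (m + 1) = (W m).flatMap phi := by
  simp [W, Function.iterate_succ_apply']

lemma flatMap_map_add_two (v : List ℕ) :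
    (v.map (· + 2)).flatMap phi = (v.flatMap phi).map (· + 2) := by
  induction v with
  | nil => simp
  | cons a t ih => simp [ih, phi_add_two]

lemma W_struct (m : ℕ) : W m = 0 :: T m ∧ ∀ a ∈ T m, 1 ≤ a := by
  induction m with
  | zero => constructor <;> simp [W, T]
  | succ m ih =>
    obtain ⟨h1, h2⟩ := ih
    have hw : W (m + 1) = 0 :: 1 :: (T m).flatMap phi := by
      rw [W_succ, h1]
      simp [phi]
    have hT : T (m + 1) = 1 :: (T m).flatMap phi := by
      have := congrArg List.tail hw; simpa [T] using this
    refine ⟨by rw [hw, hT], ?_⟩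
    rw [hT]
    intro a ha
    rcases List.mem_cons.mp ha with rfl | ha
    · exact le_refl 1
    · obtain ⟨b, hb, hab⟩ := List.mem_flatMap.mp ha
      have hb1 := h2 b hb
      unfold phi at hab
      rcases Nat.mod_two_eq_zero_or_one b with h3 | h3 <;> simp [h3] at hab <;> omega

lemma W_cons (m : ℕ) : W m = 0 :: T m := (W_struct m).1

lemma T_letters (m : ℕ) : ∀ a ∈ T m, 1 ≤ a := (W_struct m).2

lemma X_letters (m : ℕ) : ∀ a ∈ X m, 3 ≤ a := by
  intro a ha
  obtain ⟨b, hb, rfl⟩ := List.mem_map.mp ha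
  have := T_letters m b hb; omega

lemma X_succ (m : ℕ) : X (m + 1) = 3 :: (X m).flatMap phi := by
  have hw : W (m + 1) = 0 :: 1 :: (T m).flatMap phi := by
    rw [W_succ, W_cons m]
    simp [phi]
  have hT : T (m + 1) = 1 :: (T m).flatMap phi := by
    have := congrArg List.tail hw; simpa [T] using this
  rw [X, hT]
  simp [flatMap_map_add_two, X]

lemma W_rec (m : ℕ) : W (m + 3) = W (m + 2) ++ 2 :: X (m + 1) := by
  induction m with
  | zero => decide
  | succ m ih =>
    have h2 : (2 :: X (m + 1)).flatMap phi = 2 :: X (m + 2) := by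
      rw [X_succ (m + 1)]
      simp [phi]
    calc W (m + 4) = (W (m + 3)).flatMap phi := W_succ (m + 3)
      _ = (W (m + 2)).flatMap phi ++ (2 :: X (m + 1)).flatMap phi := by
          rw [ih, List.flatMap_append]
      _ = W (m + 3) ++ 2 :: X (m + 2) := by rw [← W_succ (m + 2), h2]

lemma X_prefix (m : ℕ) : X m <+: X (m + 1) := by
  induction m with
  | zero => simp [X, T, W]
  | succ m ih =>
    rw [X_succ m, X_succ (m + 1)]
    obtain ⟨t, ht⟩ := ih
    exact ⟨t.flatMap phi, by rw [← ht]; simp [X_succ]⟩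

lemma X_infix_W (m : ℕ) : X m <:+: W (m + 2) := by
  cases m with
  | zero => simp [X, T, W]
  | succ m =>
    rw [W_rec m]
    exact ⟨W (m + 2) ++ [2], [], by simp⟩

/-- Infix-of-append trichotomy. -/
lemma infix_append_cases {α : Type*} {u v w : List α} (h : u <:+: v ++ w) :
    u <:+: v ∨ u <:+: w ∨
      ∃ s p, s ≠ [] ∧ p ≠ [] ∧ u = s ++ p ∧ s <:+ v ∧ p <+: w := by
  obtain ⟨l, r, hlr⟩ := h
  have h1 : l ++ (u ++ r) = v ++ w := by simpa [List.append_assoc] using hlr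
  rcases List.append_eq_append_iff.mp h1 with ⟨a', hv, h2⟩ | ⟨c', _, hw⟩
  · rcases List.append_eq_append_iff.mp h2 with ⟨u', ha', _⟩ | ⟨c', hu, hw⟩
    · exact Or.inl ⟨l, u', by rw [hv, ha', List.append_assoc]⟩
    · rcases eq_or_ne a' [] with rfl | hane
      · exact Or.inr (Or.inl ⟨[], r, by simp [hu, hw.symm]⟩)
      · rcases eq_or_ne c' [] with rfl | hcne
        · exact Or.inl ⟨l, [], by simp [hv, hu]⟩
        · exact Or.inr (Or.inr ⟨a', c', hane, hcne, hu, ⟨l, hv.symm⟩, ⟨r, hw.symm⟩⟩)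
  · exact Or.inr (Or.inl ⟨c', r, by rw [hw]; simp [List.append_assoc]⟩)

/-- Peeling a small letter off the front. -/
lemma infix_cons_elim {u w : List ℕ} {a c : ℕ} (h : u <:+: a :: w) (hne : u ≠ [])
    (hletters : ∀ b ∈ u, c ≤ b) (ha : a < c) : u <:+: w := by
  obtain ⟨l, r, hlr⟩ := h
  cases l with
  | nil =>
    cases u with
    | nil => exact absurd rfl hne
    | cons x u' =>
      simp only [List.nil_append, List.cons_append] at hlr
      have hx : x = a := (List.cons.injEq _ _ _ _ ▸ hlr).1
      have := hletters x List.mem_cons_self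
      omega
  | cons y l' =>
    simp only [List.cons_append] at hlr
    exact ⟨l', r, (List.cons.injEq _ _ _ _ ▸ hlr).2⟩

/-- Key structural lemma: a nonempty factor of `W (m+2)` with all letters `≥ 3`
is a factor of `X m`. -/
lemma infix_X_of_infix_W : ∀ m : ℕ, ∀ u : List ℕ, u ≠ [] → (∀ a ∈ u, 3 ≤ a) →
    u <:+: W (m + 2) → u <:+: X m := by
  intro m
  induction m with
  | zero =>
    intro u hne hl h
    exfalso
    cases u with
    | nil => exact hne rfl
    | cons a u' =>
      have ha : a ∈ W 2 := h.sublist.subset List.mem_cons_self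
      have hW2 : W 2 = [0, 1, 2] := by decide
      rw [hW2] at ha
      have := hl a List.mem_cons_self
      simp at ha
      omega
  | succ m ih =>
    intro u hne hl h
    rw [W_rec m] at h
    rcases infix_append_cases h with h1 | h1 | ⟨s, p, hs, hp, rfl, _, hpw⟩
    · exact (ih u hne hl h1).trans (X_prefix m).isInfix
    · exact infix_cons_elim h1 hne hl (by norm_num)
    · exfalso
      cases p with
      | nil => exact hp rfl
      | cons x p' =>
        obtain ⟨t, ht⟩ := hpw
        have hx : x = 2 := by
          have h' := congrArg List.head? ht
          simp at h'
          omega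
        have := hl x (by simp)
        omega

/-- Lex order is preserved and reflected by mapping `(· + 2)`. -/
lemma lex_map_add_two_iff : ∀ x y : List ℕ,
    List.Lex (· < ·) (x.map (· + 2)) (y.map (· + 2)) ↔ List.Lex (· < ·) x y := by
  intro x
  induction x with
  | nil =>
    intro y
    cases y with
    | nil => simp
    | cons b t => simp [List.Lex.nil]
  | cons a s ih =>
    intro y
    cases y with
    | nil => constructor <;> (intro h; cases h)
    | cons b t =>
      constructor
      · intro h
        cases h with
        | cons h => exact List.Lex.cons ((ih t).mp h)
        | rel h => exact List.Lex.rel (by have : a + 2 < b + 2 := h; omega)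
      · intro h
        cases h with
        | cons h => exact List.Lex.cons ((ih t).mpr h)
        | rel h => exact List.Lex.rel (show a + 2 < b + 2 by omega)

/-- The head of a Lyndon word is its minimum. -/
lemma lyndon_head_min {u : List ℕ} {k : ℕ} (h : IsLyndon u) (hh : u.head? = some k) :
    ∀ a ∈ u, k ≤ a := by
  obtain ⟨hne, hlex⟩ := h
  cases u with
  | nil => exact absurd rfl hne
  | cons x t =>
    have hx : x = k := by simpa using hh
    intro a ha
    rw [← hx]
    rcases List.mem_cons.mp ha with rfl | ha
    · exact le_refl _
    · obtain ⟨t₁, t₂, rfl⟩ := List.append_of_mem ha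
      have h1 := hlex (x :: t₁) (a :: t₂) (by simp) (by simp) (by simp)
      cases h1 with
      | cons _ => exact le_refl _
      | rel h => exact le_of_lt h

lemma isLyndon_map_add_two_iff {u : List ℕ} :
    IsLyndon (u.map (· + 2)) ↔ IsLyndon u := by
  constructor
  · rintro ⟨hne, hlex⟩
    refine ⟨by simpa using hne, ?_⟩
    rintro a b ha hb rfl
    have := hlex (a.map (· + 2)) (b.map (· + 2)) (by simpa using ha) (by simpa using hb)
      (by simp)
    rw [← List.map_append] at this
    exact (lex_map_add_two_iff _ _).mp this
  · rintro ⟨hne, hlex⟩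
    refine ⟨by simpa using hne, ?_⟩
    intro a b ha hb hab
    obtain ⟨a₀, b₀, rfl, rfl, rfl⟩ := List.map_eq_append_iff.mp hab
    have := hlex a₀ b₀ (by simpa using ha) (by simpa using hb) rfl
    rw [← List.map_append]
    exact (lex_map_add_two_iff _ _).mpr this

/-- The step bijection: Lyndon factors of `W (m+2)` starting with `k+2` are exactly the
shifts of Lyndon factors of `W m` starting with `k`, for `k ≥ 1`. -/
lemma step_eq (k m : ℕ) (hk : 1 ≤ k) :
    {u : List ℕ | u <:+: W (m + 2) ∧ IsLyndon u ∧ u.head? = some (k + 2)} =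
      (fun l : List ℕ => l.map (· + 2)) ''
        {u : List ℕ | u <:+: W m ∧ IsLyndon u ∧ u.head? = some k} := by
  ext u
  simp only [Set.mem_image, Set.mem_setOf_eq]
  constructor
  · rintro ⟨hinf, hlyn, hhead⟩
    have hne : u ≠ [] := hlyn.1
    have hletters : ∀ a ∈ u, k + 2 ≤ a := lyndon_head_min hlyn hhead
    have hletters3 : ∀ a ∈ u, 3 ≤ a := fun a ha => by have := hletters a ha; omega
    have hu : (u.map (· - 2)).map (· + 2) = u := by
      rw [List.map_map]
      conv_rhs => rw [← List.map_id u]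
      exact List.map_congr_left fun a ha => by
        have := hletters3 a ha; show a - 2 + 2 = id a; simp; omega
    refine ⟨u.map (· - 2), ⟨?_, ?_, ?_⟩, hu⟩
    · -- factor of W m
      have hX : u <:+: X m := infix_X_of_infix_W m u hne hletters3 hinf
      have : u.map (· - 2) <:+: (X m).map (· - 2) := hX.map _
      have hXm : (X m).map (· - 2) = T m := by
        simp [X, List.map_map, Function.comp_def]
      rw [hXm] at this
      exact this.trans ⟨[0], [], by simpa using (W_cons m).symm⟩
    · -- Lyndon
      rw [← isLyndon_map_add_two_iff, hu]; exact hlyn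
    · -- head
      cases u with
      | nil => exact absurd rfl hne
      | cons a t =>
        have : a = k + 2 := by simpa using hhead
        simp [this]
  · rintro ⟨v, ⟨hinf, hlyn, hhead⟩, rfl⟩
    have hne : v ≠ [] := hlyn.1
    have hletters : ∀ a ∈ v, k ≤ a := lyndon_head_min hlyn hhead
    refine ⟨?_, isLyndon_map_add_two_iff.mpr hlyn, ?_⟩
    · -- factor of W (m+2)
      have hT : v <:+: T m := by
        rw [W_cons m] at hinf
        exact infix_cons_elim hinf hne (fun b hb => le_trans hk (hletters b hb))
          (by omega)
      have : v.map (· + 2) <:+: X m := by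
        simpa [X] using hT.map (· + 2)
      exact this.trans (X_infix_W m)
    · cases v with
      | nil => exact absurd rfl hne
      | cons a t =>
        have : a = k := by simpa using hhead
        simp [this]

lemma step_card (k m : ℕ) (hk : 1 ≤ k) :
    {u : List ℕ | u <:+: W (m + 2) ∧ IsLyndon u ∧ u.head? = some (k + 2)}.ncard =
      {u : List ℕ | u <:+: W m ∧ IsLyndon u ∧ u.head? = some k}.ncard := by
  rw [step_eq k m hk]
  exact Set.ncard_image_of_injective _ (List.map_injective_iff.mpr fun a b h => by omega)

lemma main_aux : ∀ j n : ℕ, 2 * j + 4 ≤ n →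
    {u : List ℕ | u <:+: W n ∧ IsLyndon u ∧ u.head? = some (2 * j + 4)}.ncard =
      {u : List ℕ | u <:+: W (n - (2 * j + 4) + 2) ∧ IsLyndon u ∧ u.head? = some 2}.ncard := by
  intro j
  induction j with
  | zero =>
    intro n hn
    obtain ⟨m, rfl⟩ : ∃ m, n = m + 2 := ⟨n - 2, by omega⟩
    have := step_card 2 m (by omega)
    norm_num at this ⊢
    rw [show m + 2 - 4 + 2 = m by omega]
    exact this
  | succ j ih =>
    intro n hn
    obtain ⟨m, rfl⟩ : ∃ m, n = m + 2 := ⟨n - 2, by omega⟩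
    have h1 := step_card (2 * j + 4) m (by omega)
    rw [show 2 * j + 4 + 2 = 2 * (j + 1) + 4 by ring] at h1
    rw [h1, ih m (by omega),
      show m - (2 * j + 4) + 2 = m + 2 - (2 * (j + 1) + 4) + 2 by omega]

/-- For every even `k ≥ 4` and every `n ≥ k`, the number of distinct Lyndon factors
of `W n` beginning with `k` equals the number of distinct Lyndon factors of
`W (n-k+2)` beginning with `2`. -/
theorem zww_lyndon_count_even : ∀ k n : ℕ, Even k → 4 ≤ k → k ≤ n →
    {u : List ℕ | u <:+: W n ∧ IsLyndon u ∧ u.head? = some k}.ncard =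
      {u : List ℕ | u <:+: W (n - k + 2) ∧ IsLyndon u ∧ u.head? = some 2}.ncard := by
  intro k n hke hk4 hkn
  obtain ⟨j, hj⟩ : ∃ j, k = 2 * j + 4 := by
    obtain ⟨r, hr⟩ := hke
    exact ⟨r - 2, by omega⟩
  subst hj
  exact main_aux j n (by omega)
end

section
/- Let u be a factor of W_n for some n ≥ 0 such that the first letter of u is 2 and u is unbordered (u has no border). Then u is a Lyndon word. -/
namespace ZWW

/-- Apply the morphism to a word. -/
def Phi (w : List ℕ) : List ℕ := w.flatMap phi

lemma Phi_append (x y : List ℕ) : Phi (x ++ y) = Phi x ++ Phi y :=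
  List.flatMap_append

lemma Phi_cons (a : ℕ) (w : List ℕ) : Phi (a :: w) = phi a ++ Phi w :=
  List.flatMap_cons

lemma Phi_nil : Phi [] = [] := rfl

lemma W_succ (n : ℕ) : W (n + 1) = Phi (W n) := by
  unfold W
  rw [Function.iterate_succ_apply']
  rfl

lemma Phi_split (w : List ℕ) (t : ℕ) : Phi w = Phi (w.take t) ++ Phi (w.drop t) := by
  rw [← Phi_append, List.take_append_drop]

lemma Phi_drop (w : List ℕ) (t : ℕ) :
    (Phi w).drop (Phi (w.take t)).length = Phi (w.drop t) := by
  rw [Phi_split w t, List.drop_left]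

lemma Phi_take (w : List ℕ) (t : ℕ) :
    (Phi w).take (Phi (w.take t)).length = Phi (w.take t) := by
  rw [Phi_split w t, List.take_left]

lemma Phi_prefix {x y : List ℕ} (h : x <+: y) : Phi x <+: Phi y := by
  obtain ⟨z, rfl⟩ := h
  exact ⟨Phi z, (Phi_append x z).symm⟩

lemma lenB_mono (w : List ℕ) {t s : ℕ} (h : t ≤ s) :
    (Phi (w.take t)).length ≤ (Phi (w.take s)).length := by
  have h1 : w.take t <+: w.take s := by
    rw [show w.take t = (w.take s).take t by rw [List.take_take, min_eq_left h]]
    exact List.take_prefix _ _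
  exact (Phi_prefix h1).length_le

/-- decomposition of a position in `Phi w` into a block index and offset -/
lemma decomp : ∀ (w : List ℕ) (p : ℕ), p < (Phi w).length →
    ∃ t a r, w[t]? = some a ∧ r < (phi a).length ∧
      p = (Phi (w.take t)).length + r ∧ (Phi w)[p]? = (phi a)[r]? := by
  intro w
  induction w with
  | nil => intro p hp; simp [Phi] at hp
  | cons c w ih =>
    intro p hp
    rw [Phi_cons] at hp ⊢
    by_cases h : p < (phi c).length
    · exact ⟨0, c, p, by simp, h, by simp [Phi_nil], List.getElem?_append_left h⟩
    · push_neg at h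
      rw [List.length_append] at hp
      obtain ⟨t, a, r, h1, h2, h3, h4⟩ := ih (p - (phi c).length) (by omega)
      refine ⟨t + 1, a, r, by simpa using h1, h2, ?_, ?_⟩
      · rw [List.take_succ_cons, Phi_cons, List.length_append]; omega
      · rw [List.getElem?_append_right h, h4]

lemma phi_even {a : ℕ} (h : a % 2 = 0) : phi a = [a, a + 1] := by simp [phi, h]

lemma phi_odd {a : ℕ} (h : a % 2 = 1) : phi a = [a + 1] := by
  simp [phi, h]

/-- First-mismatch relation: `A` and `B` agree up to position `i`, where `A` has a
smaller, even letter. -/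
def FM (A B : List ℕ) : Prop :=
  ∃ i a b, A[i]? = some a ∧ B[i]? = some b ∧ A.take i = B.take i ∧ a % 2 = 0 ∧ a < b

/-- Main invariant: any suffix starting at a letter `2` compares favorably with
any later suffix. -/
def P (w : List ℕ) : Prop :=
  ∀ p q, p < q → q < w.length → w[p]? = some 2 →
    w.drop q <+: w.drop p ∨ FM (w.drop p) (w.drop q)

lemma fm_phi {A B : List ℕ} (h : FM A B) : FM (Phi A) (Phi B) := by
  obtain ⟨i, a, b, hA, hB, ht, hev, hab⟩ := h
  obtain ⟨hiA, hAi⟩ := List.getElem?_eq_some_iff.mp hA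
  obtain ⟨hiB, hBi⟩ := List.getElem?_eq_some_iff.mp hB
  set i' := (Phi (A.take i)).length with hi'
  have hi'B : i' = (Phi (B.take i)).length := by rw [hi', ht]
  have hdropA : (Phi A).drop i' = phi a ++ Phi (A.drop (i + 1)) := by
    rw [Phi_drop, List.drop_eq_getElem_cons hiA, hAi, Phi_cons]
  have hdropB : (Phi B).drop i' = phi b ++ Phi (B.drop (i + 1)) := by
    rw [hi'B, Phi_drop, List.drop_eq_getElem_cons hiB, hBi, Phi_cons]
  have hgetA : (Phi A)[i']? = some a := by
    have := List.getElem?_drop (xs := Phi A) (i := i') (j := 0)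
    rw [hdropA, phi_even hev] at this
    simpa using this.symm
  have htake' : (Phi A).take i' = (Phi B).take i' :=
    calc (Phi A).take i' = Phi (A.take i) := by rw [hi']; exact Phi_take A i
      _ = Phi (B.take i) := by rw [ht]
      _ = (Phi B).take i' := by rw [hi'B]; exact (Phi_take B i).symm
  have hkey : ∀ b'', (Phi B)[i']? = some b'' → a < b'' → FM (Phi A) (Phi B) :=
    fun b'' h1 h2 => ⟨i', a, b'', hgetA, h1, htake', hev, h2⟩
  have hget0 : (Phi B)[i']? = ((Phi B).drop i')[0]? := by
    simpa using (List.getElem?_drop (xs := Phi B) (i := i') (j := 0)).symm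
  rcases Nat.mod_two_eq_zero_or_one b with h2 | h2
  · refine hkey b ?_ hab
    rw [hget0, hdropB, phi_even h2]; simp
  · refine hkey (b + 1) ?_ (by omega)
    rw [hget0, hdropB, phi_odd h2]; simp

/-- Structural facts about the words `W n` (for `n ≥ 3`). -/
def Good (w : List ℕ) : Prop :=
  (∃ rest, w = 0 :: 1 :: 2 :: rest) ∧
  (∀ s, w[s]? = some 1 → s = 1) ∧ (∀ s, w[s]? = some 0 → s = 0)

lemma good_step {w : List ℕ} (hG : Good w) : Good (Phi w) := by
  obtain ⟨⟨rest, hrest⟩, h1, h0⟩ := hG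
  refine ⟨⟨2 :: 3 :: Phi rest, ?_⟩, ?_, ?_⟩
  · rw [hrest]
    simp [Phi_cons, phi]
  · intro s hs
    have hslen : s < (Phi w).length := (List.getElem?_eq_some_iff.mp hs).1
    obtain ⟨t, a, r, hta, hr, hse, hsv⟩ := decomp w s hslen
    rw [hs] at hsv
    rcases Nat.mod_two_eq_zero_or_one a with h2 | h2
    · rw [phi_even h2] at hsv hr
      have hrb : r < 2 := by simpa using hr
      interval_cases r
      · simp at hsv; omega
      · simp at hsv
        have ha0 : a = 0 := by omega
        have ht0 : t = 0 := h0 t (by rw [hta, ha0])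
        have : (Phi (w.take t)).length = 0 := by rw [ht0]; simp [Phi_nil]
        omega
    · rw [phi_odd h2] at hsv hr
      have hrb : r = 0 := by simpa using hr
      subst hrb
      simp at hsv
      omega
  · intro s hs
    have hslen : s < (Phi w).length := (List.getElem?_eq_some_iff.mp hs).1
    obtain ⟨t, a, r, hta, hr, hse, hsv⟩ := decomp w s hslen
    rw [hs] at hsv
    rcases Nat.mod_two_eq_zero_or_one a with h2 | h2
    · rw [phi_even h2] at hsv hr
      have hrb : r < 2 := by simpa using hr
      interval_cases r
      · simp at hsv
        have ht0 : t = 0 := h0 t (by rw [hta, hsv])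
        have : (Phi (w.take t)).length = 0 := by rw [ht0]; simp [Phi_nil]
        omega
      · simp at hsv
    · rw [phi_odd h2] at hsv hr
      have hrb : r = 0 := by simpa using hr
      subst hrb
      simp at hsv

lemma step {w : List ℕ} (hP : P w) (hG : Good w) : P (Phi w) := by
  obtain ⟨⟨rest, hrest⟩, h1, h0⟩ := hG
  intro p q hpq hq h2
  have hp : p < (Phi w).length := lt_trans hpq hq
  obtain ⟨t, at_, rp, hwt, hrp, hpe, hpv⟩ := decomp w p hp
  rw [h2] at hpv
  -- the block containing position p starts with 2, so rp = 0 and w[t] ∈ {1, 2}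
  have hcase : rp = 0 ∧ (at_ = 2 ∨ at_ = 1) := by
    rcases Nat.mod_two_eq_zero_or_one at_ with hpar | hpar
    · rw [phi_even hpar] at hpv hrp
      have hrb : rp < 2 := by simpa using hrp
      interval_cases rp
      · simp at hpv; exact ⟨rfl, Or.inl hpv.symm⟩
      · simp at hpv; omega
    · rw [phi_odd hpar] at hpv hrp
      have hrb : rp = 0 := by simpa using hrp
      subst hrb
      simp at hpv
      exact ⟨rfl, Or.inr (by omega)⟩
  obtain ⟨hrp0, hat⟩ := hcase
  subst hrp0
  have hpeq : p = (Phi (w.take t)).length := by omega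
  have ht1 : 1 ≤ t := by
    rcases Nat.eq_zero_or_pos t with h | h
    · exfalso
      rw [h, hrest] at hwt
      simp at hwt
      omega
    · exact h
  have hlen1 : (Phi (w.take 1)).length = 2 := by
    rw [hrest]; simp [Phi_cons, Phi_nil, phi]
  have hp2 : 2 ≤ p := by
    have := lenB_mono w ht1
    omega
  -- decompose q
  obtain ⟨s, bs, rq, hws, hrq, hqe, hqv⟩ := decomp w q hq
  obtain ⟨v, hv⟩ : ∃ v, (Phi w)[q]? = some v := by
    rcases List.getElem?_eq_some_iff.mpr ⟨hq, rfl⟩ with h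
    exact ⟨_, h⟩
  rw [hv] at hqv
  have hdp0 : ((Phi w).drop p)[0]? = some 2 := by
    rw [List.getElem?_drop]; simpa using h2
  have hdq0 : ((Phi w).drop q)[0]? = some v := by
    rw [List.getElem?_drop]; simpa using hv
  by_cases hv2 : 2 < v
  · exact Or.inr ⟨0, 2, v, hdp0, hdq0, rfl, rfl, hv2⟩
  push_neg at hv2
  -- show v = 2, rq = 0, bs = 2
  have hmain : rq = 0 ∧ bs = 2 := by
    rcases Nat.mod_two_eq_zero_or_one bs with hpar | hpar
    · rw [phi_even hpar] at hqv hrq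
      have hrb : rq < 2 := by simpa using hrq
      interval_cases rq
      · simp at hqv
        refine ⟨rfl, ?_⟩
        rcases Nat.eq_zero_or_pos bs with hb0 | hb0
        · exfalso
          have hs0 : s = 0 := h0 s (by rw [hws, hb0])
          rw [hs0] at hqe
          simp [Phi_nil] at hqe
          omega
        · omega
      · exfalso
        simp at hqv
        -- v = bs + 1 odd, v ≤ 2 so v = 1, bs = 0, q = 1 < p
        have : bs = 0 := by omega
        have hs0 : s = 0 := h0 s (by rw [hws, this])
        rw [hs0] at hqe
        simp [Phi_nil] at hqe
        omega
    · exfalso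
      rw [phi_odd hpar] at hqv hrq
      have hrb : rq = 0 := by simpa using hrq
      subst hrb
      simp at hqv
      -- v = bs + 1 ≤ 2 and bs odd, so bs = 1, s = 1, q = 2 ≤ p
      have : bs = 1 := by omega
      have hs1 : s = 1 := h1 s (by rw [hws, this])
      rw [hs1] at hqe
      omega
  obtain ⟨hrq0, hbs2⟩ := hmain
  subst hrq0
  have hqeq : q = (Phi (w.take s)).length := by omega
  rw [hbs2] at hws
  have hslen : s < w.length := (List.getElem?_eq_some_iff.mp hws).1
  have hdropq : (Phi w).drop q = Phi (w.drop s) := by rw [hqeq]; exact Phi_drop w s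
  rcases hat with hat2 | hat1
  · -- w[t] = 2 : use the induction hypothesis on w
    rw [hat2] at hwt
    have hts : t < s := by
      by_contra h
      push_neg at h
      have := lenB_mono w h
      omega
    have hdropp : (Phi w).drop p = Phi (w.drop t) := by rw [hpeq]; exact Phi_drop w t
    rcases hP t s hts hslen hwt with h | h
    · left
      rw [hdropq, hdropp]
      exact Phi_prefix h
    · right
      rw [hdropq, hdropp]
      exact fm_phi h
  · -- w[t] = 1 : then t = 1, p = 2, and the suffixes start 2,2,3,... vs 2,3,...
    have ht1' : t = 1 := h1 t (by rw [hwt, hat1])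
    have hp2' : p = 2 := by rw [hpeq, ht1', hlen1]
    right
    have hA : (Phi w).drop p = 2 :: 2 :: 3 :: Phi rest := by
      rw [hp2', hrest]
      simp [Phi_cons, phi]
    have hB : (Phi w).drop q = 2 :: 3 :: Phi (w.drop (s + 1)) := by
      rw [hdropq, List.drop_eq_getElem_cons hslen,
        (List.getElem?_eq_some_iff.mp hws).2, Phi_cons, phi_even rfl]
      rfl
    exact ⟨1, 2, 3, by rw [hA]; simp, by rw [hB]; simp, by rw [hA, hB]; rfl, rfl, by omega⟩

lemma hW3 : W 3 = [0, 1, 2, 2, 3] := by decide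

lemma good_W3 : Good (W 3) := by
  rw [hW3]
  refine ⟨⟨[2, 3], rfl⟩, ?_, ?_⟩ <;> intro s h <;>
  · have hs : s < 5 := by
      by_contra hs
      push_neg at hs
      rw [List.getElem?_eq_none (by simpa using hs)] at h
      cases h
    interval_cases s <;> first | rfl | (exfalso; revert h; decide)

lemma good_W (n : ℕ) : Good (W (n + 3)) := by
  induction n with
  | zero => exact good_W3
  | succ m ih =>
    rw [show m + 1 + 3 = (m + 3) + 1 by omega, W_succ]
    exact good_step ih

lemma P_W3 : P (W 3) := by
  rw [hW3]
  intro p q hpq hq h2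
  have hp : p < 5 := by simpa using (List.getElem?_eq_some_iff.mp h2).1
  simp only [List.length_cons, List.length_nil] at hq
  have hq5 : q < 5 := by omega
  interval_cases p <;> interval_cases q <;>
    first
      | (exfalso; revert h2; decide)
      | exact Or.inr ⟨1, 2, 3, by decide, by decide, by decide, by decide, by decide⟩
      | exact Or.inr ⟨0, 2, 3, by decide, by decide, by decide, by decide, by decide⟩

lemma P_W3plus (n : ℕ) : P (W (n + 3)) := by
  induction n with
  | zero => exact P_W3
  | succ m ih =>
    rw [show m + 1 + 3 = (m + 3) + 1 by omega, W_succ]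
    exact step ih (good_W m)

lemma P_W (n : ℕ) : P (W n) := by
  match n with
  | 0 =>
    intro p q hpq hq h2
    have : q < 1 := by simpa [show W 0 = [0] from rfl] using hq
    omega
  | 1 =>
    intro p q hpq hq h2
    rw [show W 1 = [0, 1] by decide] at h2
    have hp : p < 2 := by simpa using (List.getElem?_eq_some_iff.mp h2).1
    interval_cases p <;> (exfalso; revert h2; decide)
  | 2 =>
    intro p q hpq hq h2
    rw [show W 2 = [0, 1, 2] by decide] at h2 hq
    have hp : p < 3 := by simpa using (List.getElem?_eq_some_iff.mp h2).1
    have hq3 : q < 3 := by simpa using hq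
    interval_cases p <;> first | (exfalso; revert h2; decide) | omega
  | (m + 3) => exact P_W3plus m

lemma lex_of_getElem : ∀ {i : ℕ} {X Y : List ℕ} {x y : ℕ}, X[i]? = some x →
    Y[i]? = some y → X.take i = Y.take i → x < y → List.Lex (· < ·) X Y := by
  intro i
  induction i with
  | zero =>
    intro X Y x y hX hY ht hxy
    cases X with
    | nil => simp at hX
    | cons a X' =>
      cases Y with
      | nil => simp at hY
      | cons b Y' =>
        simp only [List.getElem?_cons_zero, Option.some.injEq] at hX hY
        subst hX; subst hY
        exact List.Lex.rel hxy
  | succ i ih =>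
    intro X Y x y hX hY ht hxy
    cases X with
    | nil => simp at hX
    | cons a X' =>
      cases Y with
      | nil => simp at hY
      | cons b Y' =>
        simp only [List.getElem?_cons_succ] at hX hY
        simp only [List.take_succ_cons, List.cons.injEq] at ht
        obtain ⟨rfl, ht2⟩ := ht
        exact List.Lex.cons (ih hX hY ht2 hxy)

end ZWW

open ZWW in
/-- An unbordered factor of a ZWW word beginning with the letter `2` is a Lyndon word.
(A border of `u` is a nonempty word `v` with `|v| < |u|` that is both a prefix and a
suffix of `u`; `u` is unbordered if it has no border.) -/
theorem zww_unbordered_two_is_lyndon : ∀ n : ℕ, ∀ u : List ℕ, u <:+: W n →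
    u.head? = some 2 →
    (¬ ∃ v : List ℕ, v ≠ [] ∧ v.length < u.length ∧ v <+: u ∧ v <:+ u) →
    IsLyndon u := by
  intro n u hinf hhead hnb
  have hu : u ≠ [] := by intro h; rw [h] at hhead; simp at hhead
  refine ⟨hu, ?_⟩
  intro a b ha hb hab
  obtain ⟨s, t, hw⟩ := hinf
  have hP := P_W n
  set w := W n with hWn
  have hw' : w = s ++ a ++ (b ++ t) := by rw [← hw, hab]; simp [List.append_assoc]
  have hlb : 1 ≤ b.length := List.length_pos_iff.mpr hb
  have hla : 1 ≤ a.length := List.length_pos_iff.mpr ha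
  set p := s.length with hpdef
  set q := s.length + a.length with hqdef
  have hlw : w.length = s.length + a.length + (b.length + t.length) := by
    rw [hw']; simp; omega
  have hq : q < w.length := by omega
  have hpq : p < q := by omega
  have hdq : w.drop q = b ++ t := by
    rw [hw', show q = (s ++ a).length by simp [hqdef]]
    exact List.drop_left
  have hdp : w.drop p = (a ++ b) ++ t := by
    rw [hw', show s ++ a ++ (b ++ t) = s ++ ((a ++ b) ++ t) by simp [List.append_assoc]]
    exact List.drop_left
  have hwp : w[p]? = some 2 := by
    have h1 : (w.drop p)[0]? = w[p]? := by simpa using List.getElem?_drop (xs := w) (i := p) (j := 0)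
    rw [← h1, hdp, List.getElem?_append_left (by simp; omega)]
    cases a with
    | nil => exact absurd rfl ha
    | cons c a' =>
      rw [hab] at hhead
      simp at hhead ⊢
      omega
  have hblen : b.length < u.length := by rw [hab]; simp; omega
  have hbsuf : b <:+ u := ⟨a, hab.symm⟩
  rcases hP p q hpq hq hwp with h | h
  · -- `b ++ t` is a prefix of `(a ++ b) ++ t`, so `b` is a border of `u`
    exfalso
    rw [hdq, hdp] at h
    have hbpre : b <+: (a ++ b) ++ t := (List.prefix_append b t).trans h
    have hble : b.length ≤ (a ++ b).length := by simp
    have : b = (a ++ b).take b.length := by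
      rw [← List.take_append_of_le_length hble]
      exact List.prefix_iff_eq_take.mp hbpre
    have hbu : b <+: a ++ b := by rw [this]; exact (this ▸ List.take_prefix _ _)
    exact hnb ⟨b, hb, hblen, hab ▸ hbu, hbsuf⟩
  · obtain ⟨i, x, y, hXi, hYi, htk, _, hxy⟩ := h
    rw [hdp] at hXi htk
    rw [hdq] at hYi htk
    by_cases hib : i < b.length
    · rw [hab]
      have hiu : i < (a ++ b).length := by simp; omega
      apply lex_of_getElem (x := x) (y := y) (i := i)
      · rw [List.getElem?_append_left hiu] at hXi
        exact hXi
      · rw [List.getElem?_append_left hib] at hYi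
        rwa [List.getElem?_append_left hib]
      · have h1 : ((a ++ b) ++ t).take i = (a ++ b).take i :=
          List.take_append_of_le_length (by omega)
        have h2 : (b ++ a).take i = b.take i :=
          List.take_append_of_le_length (le_of_lt hib)
        have h3 : (b ++ t).take i = b.take i :=
          List.take_append_of_le_length (le_of_lt hib)
        rw [← h1, htk, h3, h2]
      · exact hxy
    · -- mismatch beyond `b`, so `b` is a border of `u`
      exfalso
      push_neg at hib
      have htk' : ((a ++ b) ++ t).take b.length = (b ++ t).take b.length := by
        have := congrArg (List.take b.length) htk
        rwa [List.take_take, List.take_take, min_eq_left hib] at this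
      have h4 : (b ++ t).take b.length = b := by
        rw [List.take_append_of_le_length le_rfl, List.take_length]
      have h5 : ((a ++ b) ++ t).take b.length = (a ++ b).take b.length :=
        List.take_append_of_le_length (by simp)
      have hbu : b <+: a ++ b := by
        rw [List.prefix_iff_eq_take, ← h5, htk', h4]
      exact hnb ⟨b, hb, hblen, hab ▸ hbu, hbsuf⟩
end
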